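/- arXiv:1203.2345 — 2 statements merged into one kernel-verified Lean document; each statement's English description precedes it below -/
import Mathlib

section
/- Let k > 2 be an even integer and let M₀ be a self-dual partial linear space with an involutive correlation κ₀. Then ⊛_{C_k}(∘, M₀) is isomorphic to the correlative multiplying ⊛_k(κ₀, M₀); an isomorphism is given by δ((i,x)) = (i,x) for even i and δ((i,x)) = (i, κ₀(x)) for odd i. -/
/-- A partial linear space: every line has at least two points, every point is on
at least two lines, and two distinct points are on at most one common line. -/
def IsPLS {P L : Type*} (inc : P → L → Prop) : Prop :=
  (∀ l, ∃ a b, a ≠ b ∧ inc a l ∧ inc b l) ∧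
  (∀ a, ∃ l m, l ≠ m ∧ inc a l ∧ inc a m) ∧
  (∀ a b l m, inc a l → inc b l → inc a m → inc b m → a = b ∨ l = m)

/-- An isomorphism of incidence structures. -/
structure IncIso {P₁ L₁ P₂ L₂ : Type*} (inc₁ : P₁ → L₁ → Prop) (inc₂ : P₂ → L₂ → Prop) where
  pt : P₁ ≃ P₂
  ln : L₁ ≃ L₂
  pres : ∀ a l, inc₁ a l ↔ inc₂ (pt a) (ln l)

/-- A correlation of one incidence structure onto another: a pair of bijections,
points to lines and lines to points, reversing incidence. -/
structure Correlation {P₀ L₀ P₁ L₁ : Type*} (inc₀ : P₀ → L₀ → Prop) (inc₁ : P₁ → L₁ → Prop) where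
  toLines : P₀ ≃ L₁
  toPoints : L₀ ≃ P₁
  rev : ∀ a l, inc₀ a l ↔ inc₁ (toPoints l) (toLines a)

/-- A closed substructure. -/
def IsClosedSub {P L : Type*} (inc : P → L → Prop) (B' : Set P) (B'' : Set L) : Prop :=
  (∀ a₁ a₂ l, a₁ ∈ B' → a₂ ∈ B' → a₁ ≠ a₂ → inc a₁ l → inc a₂ l → l ∈ B'') ∧
  (∀ l₁ l₂ a, l₁ ∈ B'' → l₂ ∈ B'' → l₁ ≠ l₂ → inc a l₁ → inc a l₂ → a ∈ B')

/-- One incidence step (within a substructure) between elements (points or lines). -/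
def IncStep {P L : Type*} (inc : P → L → Prop) (B' : Set P) (B'' : Set L) :
    (P ⊕ L) → (P ⊕ L) → Prop :=
  fun x y => ∃ a l, a ∈ B' ∧ l ∈ B'' ∧ inc a l ∧
    ((x = Sum.inl a ∧ y = Sum.inr l) ∨ (x = Sum.inr l ∧ y = Sum.inl a))

/-- Connectivity of a substructure: any two of its elements are joined by a finite
chain of incidences within it. -/
def SubConnected {P L : Type*} (inc : P → L → Prop) (B' : Set P) (B'' : Set L) : Prop :=
  ∀ x y : P ⊕ L, Sum.elim (· ∈ B') (· ∈ B'') x → Sum.elim (· ∈ B') (· ∈ B'') y →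
    Relation.ReflTransGen (IncStep inc B' B'') x y

/-- Connectivity of the whole incidence structure. -/
def ConnectedPLS {P L : Type*} (inc : P → L → Prop) : Prop :=
  SubConnected inc Set.univ Set.univ

/-- Collinearity of two points. -/
def Collin {P L : Type*} (inc : P → L → Prop) (a b : P) : Prop := ∃ l, inc a l ∧ inc b l

/-- A triangle: three pairwise collinear points which are not on a common line. -/
def IsTriangle {P L : Type*} (inc : P → L → Prop) (a b c : P) : Prop :=
  a ≠ b ∧ b ≠ c ∧ a ≠ c ∧ Collin inc a b ∧ Collin inc b c ∧ Collin inc a c ∧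
    ¬ ∃ l, inc a l ∧ inc b l ∧ inc c l

/-- The Shult axiom (Γ-space). -/
def Shultenian {P L : Type*} (inc : P → L → Prop) : Prop :=
  ∀ a b c d l, IsTriangle inc a b c → inc a l → inc b l → inc d l → Collin inc d c

/-- Degree of a point: the number of lines through it. -/
noncomputable def ptDeg {P L : Type*} (inc : P → L → Prop) (p : P) : ℕ :=
  Set.ncard {l | inc p l}

/-- Size of a line: the number of points on it. -/
noncomputable def lnSize {P L : Type*} (inc : P → L → Prop) (l : L) : ℕ :=
  Set.ncard {p | inc p l}

/-- `G` is a cyclic group (with distinguished generator `1`) which is either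
infinite or of even order greater than `2`. -/
def GoodGroup (G : Type*) [CommRing G] : Prop :=
  Nonempty (G ≃+* ℤ) ∨ ∃ k : ℕ, 2 < k ∧ Even k ∧ Nonempty (G ≃+* ZMod k)

/-- `I` is (as a cyclic group with generator `1`) either `ℤ` or `C_k`. -/
def CyclicIndex (I : Type*) [CommRing I] : Prop :=
  Nonempty (I ≃+* ℤ) ∨ ∃ k : ℕ, 0 < k ∧ Nonempty (I ≃+* ZMod k)

/-- Incidence on the disjoint union `S ⊕ L`, in either direction. -/
def dualInc {S L : Type*} (inc0 : S → L → Prop) : (S ⊕ L) → (S ⊕ L) → Prop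
  | Sum.inl a, Sum.inr b => inc0 a b
  | Sum.inr b, Sum.inl a => inc0 a b
  | _, _ => False

/-- Points of the multiplied structure `⊛_G(∘, M₀)`. -/
def starPt (G : Type*) [CommRing G] (S L : Type*) : Set (G × (S ⊕ L)) :=
  {p | (Even p.1 ∧ ∃ a : S, p.2 = Sum.inl a) ∨ (¬ Even p.1 ∧ ∃ l : L, p.2 = Sum.inr l)}

/-- Lines of the multiplied structure `⊛_G(∘, M₀)`. -/
def starLn (G : Type*) [CommRing G] (S L : Type*) : Set (G × (S ⊕ L)) :=
  {q | (Even q.1 ∧ ∃ l : L, q.2 = Sum.inr l) ∨ (¬ Even q.1 ∧ ∃ a : S, q.2 = Sum.inl a)}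

/-- Incidence of the multiplied structure `⊛_G(∘, M₀)`:
`(i,a) I [j,b]` iff (`i = j` and `a I₀ b` or `b I₀ a`) or (`i = j + 1` and `a = b`). -/
def starInc (G : Type*) [CommRing G] {S L : Type*} (inc0 : S → L → Prop) :
    ↥(starPt G S L) → ↥(starLn G S L) → Prop :=
  fun p l => (p.val.1 = l.val.1 ∧ dualInc inc0 p.val.2 l.val.2) ∨
    (p.val.1 = l.val.1 + 1 ∧ p.val.2 = l.val.2)

/-- The relation `⊹` on `⊛_G(∘, M₀)`: `p ⊹ l` iff `p I l` and `i = j + 1`. -/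
def starDod (G : Type*) [CommRing G] {S L : Type*} (inc0 : S → L → Prop)
    (p : ↥(starPt G S L)) (l : ↥(starLn G S L)) : Prop :=
  starInc G inc0 p l ∧ p.val.1 = l.val.1 + 1

/-- The relation `⊹₁`. -/
def dod1 {P L : Type*} (inc : P → L → Prop) (p : P) (l : L) : Prop :=
  inc p l ∧ ∃ q, q ≠ p ∧ inc q l ∧ ∀ k m n, l ≠ k → l ≠ m → l ≠ n → m ≠ n →
    inc q k → inc p m → inc p n → (∃ x, inc x k ∧ inc x m) → ¬ ∃ x, inc x k ∧ inc x n

/-- The relation `◁`: `a ◁ l` iff `a` is not on `l` and there is exactly one line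
through `a` missing `l`. -/
def corrRel {P L : Type*} (inc : P → L → Prop) (a : P) (l : L) : Prop :=
  ¬ inc a l ∧ ∃! m, inc a m ∧ ¬ ∃ x, inc x l ∧ inc x m

/-- The relation `⊹₂`. -/
def dod2 {P L : Type*} (inc : P → L → Prop) (p : P) (l : L) : Prop :=
  inc p l ∧ ∃ a, ¬ Collin inc p a ∧ corrRel inc a l

/-- The family `{B_i}` is a covering of the structure by connected closed
substructures satisfying conditions (1)-(7). -/
def GoodCover {P L I : Type*} (inc : P → L → Prop) (B' : I → Set P) (B'' : I → Set L) : Prop :=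
  (∀ p, ∃ i, p ∈ B' i) ∧ (∀ l, ∃ i, l ∈ B'' i) ∧
  (∀ i, IsClosedSub inc (B' i) (B'' i)) ∧
  (∀ i, SubConnected inc (B' i) (B'' i)) ∧
  (∀ i₁ i₂, (B' i₁ ∩ B' i₂).Nonempty → B' i₁ = B' i₂) ∧
  (∀ i₁ i₂, (B'' i₁ ∩ B'' i₂).Nonempty → B'' i₁ = B'' i₂) ∧
  (∀ i, ∀ d ∈ B' i, ∃ m, inc d m ∧ m ∉ B'' i) ∧
  (∀ i, ∀ m ∈ B'' i, ∃ d, inc d m ∧ d ∉ B' i) ∧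
  (∀ i, IsClosedSub inc (B' i)ᶜ (B'' i)ᶜ) ∧
  (∀ (i : I) (p : P) (m₁ m₂ m₃ : L) (d₁ d₂ d₃ : P),
    inc p m₁ → inc p m₂ → inc p m₃ → inc d₁ m₁ → inc d₂ m₂ → inc d₃ m₃ →
    m₁ ∈ B'' i → m₂ ∈ B'' i → m₃ ∈ B'' i → d₁ ∉ B' i → d₂ ∉ B' i → d₃ ∉ B' i →
    ∃ n, inc d₁ n ∧ inc d₂ n ∧ inc d₃ n) ∧
  (∀ (i : I) (n : L) (d₁ d₂ d₃ : P) (m₁ m₂ m₃ : L),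
    inc d₁ n → inc d₂ n → inc d₃ n → inc d₁ m₁ → inc d₂ m₂ → inc d₃ m₃ →
    d₁ ∈ B' i → d₂ ∈ B' i → d₃ ∈ B' i → m₁ ∉ B'' i → m₂ ∉ B'' i → m₃ ∉ B'' i →
    ∃ q, inc q m₁ ∧ inc q m₂ ∧ inc q m₃)

/-- The relation `ρ` on the index set: `j ρ i` iff `j ≠ i` and some line of `B''_j`
is incident with some point of `B'_i`. -/
def rhoRel {P L I : Type*} (inc : P → L → Prop) (B' : I → Set P) (B'' : I → Set L)
    (j i : I) : Prop :=
  j ≠ i ∧ ∃ l ∈ B'' j, ∃ a ∈ B' i, inc a l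

/-- The relation `⊹` determined by a covering: `a ⊹ m` iff `a I m` and no member of
the covering contains both `a` and `m`. -/
def dodRel {P L I : Type*} (inc : P → L → Prop) (B' : I → Set P) (B'' : I → Set L)
    (a : P) (m : L) : Prop :=
  inc a m ∧ ¬ ∃ i, a ∈ B' i ∧ m ∈ B'' i

/-- Incidence of the structure `⊛_{i∈I}(M_i, φ_i)` obtained by glueing the family
`(M_i)` along the correlations `φ_i`. -/
def glueInc {I : Type*} [CommRing I] {P Lf : I → Type*} (inc : ∀ i, P i → Lf i → Prop)
    (φ : ∀ i, Correlation (inc i) (inc (i + 1))) :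
    (Σ i, P i) → (Σ i, Lf i) → Prop :=
  fun p l => (∃ (i : I) (a : P i) (m : Lf i), p = ⟨i, a⟩ ∧ l = ⟨i, m⟩ ∧ inc i a m) ∨
    (∃ (j : I) (m : Lf j), p = ⟨j + 1, (φ j).toPoints m⟩ ∧ l = ⟨j, m⟩)

/-- The composite `φ_{n-1} ∘ ⋯ ∘ φ_1 ∘ φ_0` acting on the elements of `M₀`. -/
def corrChain {I : Type*} [CommRing I] {P Lf : I → Type*} (inc : ∀ i, P i → Lf i → Prop)
    (φ : ∀ i, Correlation (inc i) (inc (i + 1))) :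
    (n : ℕ) → (P 0 ⊕ Lf 0) → (P (n : I) ⊕ Lf (n : I))
  | 0 => cast (by rw [Nat.cast_zero])
  | n + 1 => fun x =>
      cast (by rw [Nat.cast_add_one])
        (Sum.elim (fun a => Sum.inr ((φ (n : I)).toLines a))
          (fun m => Sum.inl ((φ (n : I)).toPoints m)) (corrChain inc φ n x))

/-- The correlative multiplying `⊛_k(κ₀, M₀)`. -/
def corInc {S L : Type*} (k : ℕ) (inc0 : S → L → Prop) (kap : L → S) :
    ZMod k × S → ZMod k × L → Prop :=
  fun p l => (p.1 = l.1 ∧ inc0 p.2 l.2) ∨ (p.1 = l.1 + 1 ∧ p.2 = kap l.2)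

lemma even_zmod_iff {k : ℕ} [NeZero k] (hke : Even k) (x : ZMod k) :
    Even x ↔ (ZMod.castHom hke.two_dvd (ZMod 2)) x = 0 := by
  constructor
  · rintro ⟨r, rfl⟩
    rw [map_add]
    exact CharTwo.add_self_eq_zero _
  · intro h
    have hv : ((x.val : ℕ) : ZMod 2) = 0 := by
      rwa [ZMod.natCast_val, ← ZMod.castHom_apply (h := hke.two_dvd)]
    have h2 : 2 ∣ x.val := (ZMod.natCast_eq_zero_iff _ _).mp hv
    obtain ⟨m, hm⟩ := h2
    refine ⟨(m : ZMod k), ?_⟩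
    have hx : x = ((x.val : ℕ) : ZMod k) := (ZMod.natCast_rightInverse x).symm
    rw [hx, hm]
    push_cast
    ring

lemma even_add_one_zmod {k : ℕ} [NeZero k] (hke : Even k) (x : ZMod k) :
    Even (x + 1) ↔ ¬ Even x := by
  rw [even_zmod_iff hke, even_zmod_iff hke, map_add, map_one]
  have h : ∀ y : ZMod 2, y + 1 = 0 ↔ ¬ y = 0 := by decide
  exact h _

/-- for even `k > 2` and a self-dual PLS `M₀` with involutive
correlation `κ₀`, `⊛_{C_k}(∘, M₀) ≅ ⊛_k(κ₀, M₀)`, via `δ((i,x)) = (i,x)` for even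
`i` and `δ((i,x)) = (i, κ₀(x))` for odd `i`. -/
theorem star_iso_correlative_multiplying (k : ℕ) (hk : 2 < k) (hke : Even k)
    {S L : Type} (inc0 : S → L → Prop) (hPLS : IsPLS inc0)
    (κ₀ : Correlation inc0 inc0)
    (hinv1 : ∀ a, κ₀.toPoints (κ₀.toLines a) = a)
    (hinv2 : ∀ l, κ₀.toLines (κ₀.toPoints l) = l) :
    ∃ δ : IncIso (starInc (ZMod k) inc0) (corInc k inc0 κ₀.toPoints),
      (∀ (p : ↥(starPt (ZMod k) S L)) (a : S),
        p.val.2 = Sum.inl a → δ.pt p = (p.val.1, a)) ∧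
      (∀ (p : ↥(starPt (ZMod k) S L)) (b : L),
        p.val.2 = Sum.inr b → δ.pt p = (p.val.1, κ₀.toPoints b)) ∧
      (∀ (l : ↥(starLn (ZMod k) S L)) (b : L),
        l.val.2 = Sum.inr b → δ.ln l = (l.val.1, b)) ∧
      (∀ (l : ↥(starLn (ZMod k) S L)) (a : S),
        l.val.2 = Sum.inl a → δ.ln l = (l.val.1, κ₀.toLines a)) := by
  classical
  haveI : NeZero k := ⟨by omega⟩
  have hpar : ∀ x : ZMod k, Even (x + 1) ↔ ¬ Even x := even_add_one_zmod hke
  have hne : ∀ {i j : ZMod k}, Even i → Even j → i ≠ j + 1 := by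
    intro i j hi hj h
    exact (hpar j).mp (h ▸ hi) hj
  have hne' : ∀ {i j : ZMod k}, ¬ Even i → ¬ Even j → i ≠ j + 1 := by
    intro i j hi hj h
    exact hi (h ▸ (hpar j).mpr hj)
  have hneq : ∀ {i j : ZMod k}, Even i → ¬ Even j → i ≠ j := by
    intro i j hi hj h
    exact hj (h ▸ hi)
  set ptF : ↥(starPt (ZMod k) S L) → ZMod k × S := fun p =>
    Sum.elim (fun a => (p.val.1, a)) (fun b => (p.val.1, κ₀.toPoints b)) p.val.2 with hptF
  set ptG : ZMod k × S → ↥(starPt (ZMod k) S L) := fun q =>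
    if h : Even q.1 then ⟨(q.1, Sum.inl q.2), Or.inl ⟨h, q.2, rfl⟩⟩
    else ⟨(q.1, Sum.inr (κ₀.toLines q.2)), Or.inr ⟨h, κ₀.toLines q.2, rfl⟩⟩ with hptG
  set lnF : ↥(starLn (ZMod k) S L) → ZMod k × L := fun l =>
    Sum.elim (fun a => (l.val.1, κ₀.toLines a)) (fun b => (l.val.1, b)) l.val.2 with hlnF
  set lnG : ZMod k × L → ↥(starLn (ZMod k) S L) := fun q =>
    if h : Even q.1 then ⟨(q.1, Sum.inr q.2), Or.inl ⟨h, q.2, rfl⟩⟩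
    else ⟨(q.1, Sum.inl (κ₀.toPoints q.2)), Or.inr ⟨h, κ₀.toPoints q.2, rfl⟩⟩ with hlnG
  have ptGF : ∀ p, ptG (ptF p) = p := by
    rintro ⟨⟨i, x⟩, hp⟩
    have hp' := hp
    simp only [starPt, Set.mem_setOf_eq] at hp'
    rcases hp' with ⟨he, a, rfl⟩ | ⟨he, b, rfl⟩
    · simp only [hptF, hptG, Sum.elim_inl]
      rw [dif_pos he]
    · simp only [hptF, hptG, Sum.elim_inr]
      rw [dif_neg he]
      simp [hinv2]
  have ptFG : ∀ q, ptF (ptG q) = q := by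
    rintro ⟨i, a⟩
    by_cases h : Even i
    · simp only [hptG]
      rw [dif_pos h]
      rfl
    · simp only [hptG]
      rw [dif_neg h]
      simp only [hptF, Sum.elim_inr]
      rw [hinv1]
  have lnGF : ∀ l, lnG (lnF l) = l := by
    rintro ⟨⟨i, x⟩, hl⟩
    have hl' := hl
    simp only [starLn, Set.mem_setOf_eq] at hl'
    rcases hl' with ⟨he, b, rfl⟩ | ⟨he, a, rfl⟩
    · simp only [hlnF, hlnG, Sum.elim_inr]
      rw [dif_pos he]
    · simp only [hlnF, hlnG, Sum.elim_inl]
      rw [dif_neg he]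
      simp [hinv1]
  have lnFG : ∀ q, lnF (lnG q) = q := by
    rintro ⟨i, m⟩
    by_cases h : Even i
    · simp only [hlnG]
      rw [dif_pos h]
      rfl
    · simp only [hlnG]
      rw [dif_neg h]
      simp only [hlnF, Sum.elim_inl]
      rw [hinv2]
  have pres : ∀ p l, starInc (ZMod k) inc0 p l ↔
      corInc k inc0 κ₀.toPoints (ptF p) (lnF l) := by
    rintro ⟨⟨i, x⟩, hp⟩ ⟨⟨j, y⟩, hl⟩
    have hp' := hp
    have hl' := hl
    simp only [starPt, Set.mem_setOf_eq] at hp'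
    simp only [starLn, Set.mem_setOf_eq] at hl'
    rcases hp' with ⟨hei, a, rfl⟩ | ⟨hei, b, rfl⟩ <;>
      rcases hl' with ⟨hej, m, rfl⟩ | ⟨hej, c, rfl⟩
    · -- even point inl a, even line inr m
      simp only [starInc, corInc, hptF, hlnF, Sum.elim_inl, Sum.elim_inr]
      constructor
      · rintro (⟨hij, hinc⟩ | ⟨_, hxy⟩)
        · exact Or.inl ⟨hij, hinc⟩
        · exact absurd hxy (by simp)
      · rintro (⟨hij, hinc⟩ | ⟨hij, _⟩)
        · exact Or.inl ⟨hij, hinc⟩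
        · exact absurd hij (hne hei hej)
    · -- even point inl a, odd line inl c
      simp only [starInc, corInc, hptF, hlnF, Sum.elim_inl]
      constructor
      · rintro (⟨hij, hinc⟩ | ⟨hij, hxy⟩)
        · exact absurd hij (hneq hei hej)
        · exact Or.inr ⟨hij, by rw [hinv1]; exact Sum.inl.inj hxy⟩
      · rintro (⟨hij, _⟩ | ⟨hij, hxy⟩)
        · exact absurd hij (hneq hei hej)
        · refine Or.inr ⟨hij, ?_⟩
          rw [hinv1] at hxy
          rw [hxy]
    · -- odd point inr b, even line inr m
      simp only [starInc, corInc, hptF, hlnF, Sum.elim_inr]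
      constructor
      · rintro (⟨hij, hinc⟩ | ⟨hij, hxy⟩)
        · exact absurd hij.symm (hneq hej hei)
        · exact Or.inr ⟨hij, congrArg κ₀.toPoints (Sum.inr.inj hxy)⟩
      · rintro (⟨hij, _⟩ | ⟨hij, hxy⟩)
        · exact absurd hij.symm (hneq hej hei)
        · exact Or.inr ⟨hij, congrArg Sum.inr (κ₀.toPoints.injective hxy)⟩
    · -- odd point inr b, odd line inl c
      simp only [starInc, corInc, hptF, hlnF, Sum.elim_inl, Sum.elim_inr]
      constructor
      · rintro (⟨hij, hinc⟩ | ⟨hij, hxy⟩)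
        · exact Or.inl ⟨hij, (κ₀.rev c b).mp hinc⟩
        · exact absurd hxy (by simp)
      · rintro (⟨hij, hinc⟩ | ⟨hij, _⟩)
        · exact Or.inl ⟨hij, (κ₀.rev c b).mpr hinc⟩
        · exact absurd hij (hne' hei hej)
  refine ⟨⟨⟨ptF, ptG, ptGF, ptFG⟩, ⟨lnF, lnG, lnGF, lnFG⟩, pres⟩, ?_, ?_, ?_, ?_⟩
  · rintro ⟨⟨i, x⟩, hp⟩ a h
    simp only at h
    subst h
    rfl
  · rintro ⟨⟨i, x⟩, hp⟩ b h
    simp only at h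
    subst h
    rfl
  · rintro ⟨⟨i, x⟩, hl⟩ b h
    simp only at h
    subst h
    rfl
  · rintro ⟨⟨i, x⟩, hl⟩ a h
    simp only at h
    subst h
    rfl
end

section
/- Let M₀ be a connected finite partial linear space in which every point has the same degree κ and every line the same size ρ with ρ ≠ κ, and let G be a cyclic group that is either infinite or of even order greater than 2. Then every automorphism of ⊛_G(∘, M₀) maps the family {im(ε_i) : i ∈ G} of closed substructures onto itself (i.e., permutes this covering). -/
lemma goodGroup_parity {G : Type} [CommRing G] (hG : GoodGroup G) :
    ∃ φ : G →+* ZMod 2, ∀ x : G, Even x ↔ φ x = 0 := by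
  have key : ∀ {R : Type} [CommRing R] (e : G ≃+* R) (ψ : R →+* ZMod 2),
      (∀ y : R, Even y ↔ ψ y = 0) → ∃ φ : G →+* ZMod 2, ∀ x : G, Even x ↔ φ x = 0 := by
    intro R _ e ψ hψ
    refine ⟨ψ.comp e.toRingHom, fun x => ?_⟩
    have : Even x ↔ Even (e x) := by
      constructor
      · rintro ⟨c, rfl⟩; exact ⟨e c, by simp⟩
      · rintro ⟨c, hc⟩
        refine ⟨e.symm c, e.injective ?_⟩
        simp [hc]
    rw [this, hψ]; rfl
  rcases hG with ⟨⟨e⟩⟩ | ⟨k, hk2, hke, ⟨e⟩⟩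
  · refine key e (Int.castRingHom (ZMod 2)) fun n => ?_
    rw [even_iff_two_dvd]
    exact (ZMod.intCast_zmod_eq_zero_iff_dvd n 2).symm
  · haveI : NeZero k := ⟨by omega⟩
    refine key e (ZMod.castHom hke.two_dvd (ZMod 2)) fun y => ?_
    constructor
    · rintro ⟨c, rfl⟩
      rw [map_add]
      exact CharTwo.add_self_eq_zero _
    · intro h
      obtain ⟨n, rfl⟩ := ZMod.natCast_zmod_surjective y
      rw [map_natCast] at h
      obtain ⟨m, rfl⟩ := (ZMod.natCast_eq_zero_iff_even.mp h)
      exact ⟨(m : ZMod k), by push_cast; ring⟩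
set_option linter.unusedSectionVars false
section Counting

variable {G : Type} [CommRing G] {S L : Type} [Finite S] [Finite L] (inc0 : S → L → Prop)

lemma starPt_even_inl {i : G} {a : S} (hp : ((i, (Sum.inl a : S ⊕ L))) ∈ starPt G S L) :
    Even i := by
  rcases hp with ⟨h, _⟩ | ⟨_, l, hl⟩
  · exact h
  · exact absurd hl (by simp)

lemma starPt_odd_inr {i : G} {m : L} (hp : ((i, (Sum.inr m : S ⊕ L))) ∈ starPt G S L) :
    ¬ Even i := by
  rcases hp with ⟨_, a, ha⟩ | ⟨h, _⟩
  · exact absurd ha (by simp)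
  · exact h

lemma starLn_even_inr {i : G} {m : L} (hl : ((i, (Sum.inr m : S ⊕ L))) ∈ starLn G S L) :
    Even i := by
  rcases hl with ⟨h, _⟩ | ⟨_, a, ha⟩
  · exact h
  · exact absurd ha (by simp)

lemma starLn_odd_inl {i : G} {a : S} (hl : ((i, (Sum.inl a : S ⊕ L))) ∈ starLn G S L) :
    ¬ Even i := by
  rcases hl with ⟨_, m, hm⟩ | ⟨h, _⟩
  · exact absurd hm (by simp)
  · exact h

lemma ptDeg_star_inl (halt : ∀ x : G, Even (x + 1) ↔ ¬ Even x)
    {i : G} {a : S} (hp : ((i, (Sum.inl a : S ⊕ L))) ∈ starPt G S L) :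
    ptDeg (starInc G inc0) ⟨(i, Sum.inl a), hp⟩ = ptDeg inc0 a + 1 := by
  have hEven : Even i := starPt_even_inl hp
  have h1 : ¬ Even (i - 1) := by
    have := halt (i - 1); rw [sub_add_cancel] at this; exact this.mp hEven
  set l₀ : ↥(starLn G S L) := ⟨(i - 1, Sum.inl a), Or.inr ⟨h1, a, rfl⟩⟩ with hl₀
  set g : L → ↥(starLn G S L) := fun m => ⟨(i, Sum.inr m), Or.inl ⟨hEven, m, rfl⟩⟩ with hg
  have hginj : Function.Injective g := by
    intro m m' h
    have := congrArg (fun l => l.val.2) h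
    simpa [hg] using this
  have hset : {l | starInc G inc0 ⟨(i, Sum.inl a), hp⟩ l}
      = insert l₀ (g '' {m | inc0 a m}) := by
    ext l
    obtain ⟨⟨j, y⟩, hlmem⟩ := l
    simp only [Set.mem_setOf_eq, Set.mem_insert_iff, Set.mem_image]
    constructor
    · rintro (⟨h1, h2⟩ | ⟨h1, h2⟩) <;> dsimp only at h1 h2
      · rcases y with b | m
        · exact h2.elim
        · exact Or.inr ⟨m, h2, Subtype.ext (Prod.ext h1 rfl)⟩
      · refine Or.inl (Subtype.ext (Prod.ext ?_ h2.symm))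
        show j = i - 1
        rw [h1]; ring
    · rintro (h | ⟨m, hm, h⟩)
      · rw [h]
        refine Or.inr ⟨?_, rfl⟩
        show i = i - 1 + 1
        ring
      · rw [← h]
        exact Or.inl ⟨rfl, hm⟩
  have hfin : (g '' {m | inc0 a m}).Finite := (Set.toFinite _).image g
  have hnm : l₀ ∉ g '' {m | inc0 a m} := by
    rintro ⟨m, _, h⟩
    have := congrArg (fun l => l.val.2) h
    simp [hg, hl₀] at this
  rw [ptDeg, hset, Set.ncard_insert_of_notMem hnm hfin,
    Set.ncard_image_of_injective _ hginj]
  rfl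



lemma ptDeg_star_inr (halt : ∀ x : G, Even (x + 1) ↔ ¬ Even x)
    {i : G} {m : L} (hp : ((i, (Sum.inr m : S ⊕ L))) ∈ starPt G S L) :
    ptDeg (starInc G inc0) ⟨(i, Sum.inr m), hp⟩ = lnSize inc0 m + 1 := by
  have hOdd : ¬ Even i := starPt_odd_inr hp
  have h1 : Even (i - 1) := by
    have h := halt (i - 1); rw [sub_add_cancel] at h
    by_contra hc; exact hOdd (h.mpr hc)
  set l₀ : ↥(starLn G S L) := ⟨(i - 1, Sum.inr m), Or.inl ⟨h1, m, rfl⟩⟩ with hl₀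
  set g : S → ↥(starLn G S L) := fun a => ⟨(i, Sum.inl a), Or.inr ⟨hOdd, a, rfl⟩⟩ with hg
  have hginj : Function.Injective g := by
    intro a a' h
    have := congrArg (fun l => l.val.2) h
    simpa [hg] using this
  have hset : {l | starInc G inc0 ⟨(i, Sum.inr m), hp⟩ l}
      = insert l₀ (g '' {a | inc0 a m}) := by
    ext l
    obtain ⟨⟨j, y⟩, hlmem⟩ := l
    simp only [Set.mem_setOf_eq, Set.mem_insert_iff, Set.mem_image]
    constructor
    · rintro (⟨h1, h2⟩ | ⟨h1, h2⟩) <;> dsimp only at h1 h2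
      · rcases y with a | m'
        · exact Or.inr ⟨a, h2, Subtype.ext (Prod.ext h1 rfl)⟩
        · exact h2.elim
      · refine Or.inl (Subtype.ext (Prod.ext ?_ h2.symm))
        show j = i - 1
        rw [h1]; ring
    · rintro (h | ⟨a, ha, h⟩)
      · rw [h]
        refine Or.inr ⟨?_, rfl⟩
        show i = i - 1 + 1
        ring
      · rw [← h]
        exact Or.inl ⟨rfl, ha⟩
  have hfin : (g '' {a | inc0 a m}).Finite := (Set.toFinite _).image g
  have hnm : l₀ ∉ g '' {a | inc0 a m} := by
    rintro ⟨a, _, h⟩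
    have := congrArg (fun l => l.val.2) h
    simp [hg, hl₀] at this
  rw [ptDeg, hset, Set.ncard_insert_of_notMem hnm hfin,
    Set.ncard_image_of_injective _ hginj]
  rfl

lemma lnSize_star_inr (halt : ∀ x : G, Even (x + 1) ↔ ¬ Even x)
    {i : G} {m : L} (hl : ((i, (Sum.inr m : S ⊕ L))) ∈ starLn G S L) :
    lnSize (starInc G inc0) ⟨(i, Sum.inr m), hl⟩ = lnSize inc0 m + 1 := by
  have hEven : Even i := starLn_even_inr hl
  have h1 : ¬ Even (i + 1) := fun h => ((halt i).mp h) hEven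
  set p₀ : ↥(starPt G S L) := ⟨(i + 1, Sum.inr m), Or.inr ⟨h1, m, rfl⟩⟩ with hp₀
  set g : S → ↥(starPt G S L) := fun a => ⟨(i, Sum.inl a), Or.inl ⟨hEven, a, rfl⟩⟩ with hg
  have hginj : Function.Injective g := by
    intro a a' h
    have := congrArg (fun p => p.val.2) h
    simpa [hg] using this
  have hset : {p | starInc G inc0 p ⟨(i, Sum.inr m), hl⟩}
      = insert p₀ (g '' {a | inc0 a m}) := by
    ext p
    obtain ⟨⟨j, y⟩, hpmem⟩ := p
    simp only [Set.mem_setOf_eq, Set.mem_insert_iff, Set.mem_image]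
    constructor
    · rintro (⟨h1, h2⟩ | ⟨h1, h2⟩) <;> dsimp only at h1 h2
      · rcases y with a | m'
        · exact Or.inr ⟨a, h2, Subtype.ext (Prod.ext h1.symm rfl)⟩
        · exact h2.elim
      · exact Or.inl (Subtype.ext (Prod.ext h1 h2))
    · rintro (h | ⟨a, ha, h⟩)
      · rw [h]
        exact Or.inr ⟨rfl, rfl⟩
      · rw [← h]
        exact Or.inl ⟨rfl, ha⟩
  have hfin : (g '' {a | inc0 a m}).Finite := (Set.toFinite _).image g
  have hnm : p₀ ∉ g '' {a | inc0 a m} := by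
    rintro ⟨a, _, h⟩
    have := congrArg (fun p => p.val.2) h
    simp [hg, hp₀] at this
  rw [lnSize, hset, Set.ncard_insert_of_notMem hnm hfin,
    Set.ncard_image_of_injective _ hginj]
  rfl

lemma lnSize_star_inl (halt : ∀ x : G, Even (x + 1) ↔ ¬ Even x)
    {i : G} {a : S} (hl : ((i, (Sum.inl a : S ⊕ L))) ∈ starLn G S L) :
    lnSize (starInc G inc0) ⟨(i, Sum.inl a), hl⟩ = ptDeg inc0 a + 1 := by
  have hOdd : ¬ Even i := starLn_odd_inl hl
  have h1 : Even (i + 1) := by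
    by_contra hc; exact hc ((halt i).mpr hOdd)
  set p₀ : ↥(starPt G S L) := ⟨(i + 1, Sum.inl a), Or.inl ⟨h1, a, rfl⟩⟩ with hp₀
  set g : L → ↥(starPt G S L) := fun m => ⟨(i, Sum.inr m), Or.inr ⟨hOdd, m, rfl⟩⟩ with hg
  have hginj : Function.Injective g := by
    intro m m' h
    have := congrArg (fun p => p.val.2) h
    simpa [hg] using this
  have hset : {p | starInc G inc0 p ⟨(i, Sum.inl a), hl⟩}
      = insert p₀ (g '' {m | inc0 a m}) := by
    ext p
    obtain ⟨⟨j, y⟩, hpmem⟩ := p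
    simp only [Set.mem_setOf_eq, Set.mem_insert_iff, Set.mem_image]
    constructor
    · rintro (⟨h1, h2⟩ | ⟨h1, h2⟩) <;> dsimp only at h1 h2
      · rcases y with b | m
        · exact h2.elim
        · exact Or.inr ⟨m, h2, Subtype.ext (Prod.ext h1.symm rfl)⟩
      · exact Or.inl (Subtype.ext (Prod.ext h1 h2))
    · rintro (h | ⟨m, hm, h⟩)
      · rw [h]
        exact Or.inr ⟨rfl, rfl⟩
      · rw [← h]
        exact Or.inl ⟨rfl, hm⟩
  have hfin : (g '' {m | inc0 a m}).Finite := (Set.toFinite _).image g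
  have hnm : p₀ ∉ g '' {m | inc0 a m} := by
    rintro ⟨m, _, h⟩
    have := congrArg (fun p => p.val.2) h
    simp [hg, hp₀] at this
  rw [lnSize, hset, Set.ncard_insert_of_notMem hnm hfin,
    Set.ncard_image_of_injective _ hginj]
  rfl

end Counting
section Dod

variable {G : Type} [CommRing G] {S L : Type} [Finite S] [Finite L] (inc0 : S → L → Prop)

lemma starInc_fst_of_not_dod (hone : (1 : G) ≠ 0) {p : ↥(starPt G S L)}
    {l : ↥(starLn G S L)} (h : starInc G inc0 p l) (hnd : ¬ starDod G inc0 p l) :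
    p.val.1 = l.val.1 := by
  rcases h with ⟨h1, _⟩ | ⟨h1, h2⟩
  · exact h1
  · exact absurd ⟨Or.inr ⟨h1, h2⟩, h1⟩ hnd

lemma not_dod_of_fst_eq (hone : (1 : G) ≠ 0) {p : ↥(starPt G S L)}
    {l : ↥(starLn G S L)} (h : p.val.1 = l.val.1) : ¬ starDod G inc0 p l := by
  rintro ⟨-, h1⟩
  rw [h] at h1
  exact hone (by rwa [left_eq_add] at h1)

lemma starDod_iff_deg {κ ρ : ℕ} (hdeg : ∀ a, ptDeg inc0 a = κ)
    (hsize : ∀ l, lnSize inc0 l = ρ) (hne : ρ ≠ κ)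
    (hone : (1 : G) ≠ 0) (halt : ∀ x : G, Even (x + 1) ↔ ¬ Even x)
    (p : ↥(starPt G S L)) (l : ↥(starLn G S L)) :
    starDod G inc0 p l ↔ starInc G inc0 p l ∧
      lnSize (starInc G inc0) l = ptDeg (starInc G inc0) p := by
  obtain ⟨⟨i, x⟩, hp⟩ := p
  obtain ⟨⟨j, y⟩, hl⟩ := l
  constructor
  · rintro ⟨hinc, h1⟩
    refine ⟨hinc, ?_⟩
    dsimp only at h1
    have h2 : x = y := by
      rcases hinc with ⟨ha, -⟩ | ⟨-, hb⟩
      · dsimp only at ha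
        rw [ha] at h1
        exact absurd (by rwa [left_eq_add] at h1) hone
      · exact hb
    subst h2
    rcases x with a | m
    · rw [ptDeg_star_inl inc0 halt hp, lnSize_star_inl inc0 halt hl]
    · rw [ptDeg_star_inr inc0 halt hp, lnSize_star_inr inc0 halt hl]
  · rintro ⟨hinc, heq⟩
    refine ⟨hinc, ?_⟩
    rcases hinc with ⟨h1, h2⟩ | ⟨h1, h2⟩
    · exfalso
      dsimp only at h1 h2
      subst h1
      rcases x with a | m <;> rcases y with b | m'
      · exact h2.elim
      · rw [ptDeg_star_inl inc0 halt hp, lnSize_star_inr inc0 halt hl,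
          hdeg, hsize] at heq
        exact hne (by omega)
      · rw [ptDeg_star_inr inc0 halt hp, lnSize_star_inl inc0 halt hl,
          hdeg, hsize] at heq
        exact hne (by omega)
      · exact h2.elim
    · exact h1

lemma iso_ptDeg (f : IncIso (starInc G inc0) (starInc G inc0)) (p : ↥(starPt G S L)) :
    ptDeg (starInc G inc0) (f.pt p) = ptDeg (starInc G inc0) p := by
  have hs : {l | starInc G inc0 (f.pt p) l} = f.ln '' {l | starInc G inc0 p l} := by
    ext l
    constructor
    · intro h
      refine ⟨f.ln.symm l, ?_, f.ln.apply_symm_apply l⟩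
      rw [Set.mem_setOf_eq, f.pres, f.ln.apply_symm_apply]
      exact h
    · rintro ⟨m, hm, rfl⟩
      exact (f.pres p m).mp hm
  rw [ptDeg, ptDeg, hs, Set.ncard_image_of_injective _ f.ln.injective]

lemma iso_lnSize (f : IncIso (starInc G inc0) (starInc G inc0)) (l : ↥(starLn G S L)) :
    lnSize (starInc G inc0) (f.ln l) = lnSize (starInc G inc0) l := by
  have hs : {p | starInc G inc0 p (f.ln l)} = f.pt '' {p | starInc G inc0 p l} := by
    ext p
    constructor
    · intro h
      refine ⟨f.pt.symm p, ?_, f.pt.apply_symm_apply p⟩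
      rw [Set.mem_setOf_eq, f.pres, f.pt.apply_symm_apply]
      exact h
    · rintro ⟨q, hq, rfl⟩
      exact (f.pres q l).mp hq
  rw [lnSize, lnSize, hs, Set.ncard_image_of_injective _ f.pt.injective]

lemma iso_dod {κ ρ : ℕ} (hdeg : ∀ a, ptDeg inc0 a = κ)
    (hsize : ∀ l, lnSize inc0 l = ρ) (hne : ρ ≠ κ)
    (hone : (1 : G) ≠ 0) (halt : ∀ x : G, Even (x + 1) ↔ ¬ Even x)
    (f : IncIso (starInc G inc0) (starInc G inc0))
    (p : ↥(starPt G S L)) (l : ↥(starLn G S L)) :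
    starDod G inc0 (f.pt p) (f.ln l) ↔ starDod G inc0 p l := by
  rw [starDod_iff_deg inc0 hdeg hsize hne hone halt,
    starDod_iff_deg inc0 hdeg hsize hne hone halt,
    iso_ptDeg, iso_lnSize, ← f.pres]

end Dod
section Chains

variable {G : Type} [CommRing G] {S L : Type} [Finite S] [Finite L] (inc0 : S → L → Prop)

/-- Two incidence steps. -/
def step2 {S L : Type} (inc0 : S → L → Prop) : (S ⊕ L) → (S ⊕ L) → Prop :=
  fun x y => ∃ w, dualInc inc0 x w ∧ dualInc inc0 w y

lemma dualInc_symm {S L : Type} {inc0 : S → L → Prop} {x y : S ⊕ L}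
    (h : dualInc inc0 x y) : dualInc inc0 y x := by
  cases x <;> cases y <;> simp [dualInc] at h ⊢ <;> exact h

lemma dualInc_isLeft {S L : Type} {inc0 : S → L → Prop} {x y : S ⊕ L}
    (h : dualInc inc0 x y) : x.isLeft = !y.isLeft := by
  cases x <;> cases y <;> simp [dualInc] at h ⊢

lemma step2_isLeft {S L : Type} {inc0 : S → L → Prop} {x y : S ⊕ L}
    (h : step2 inc0 x y) : x.isLeft = y.isLeft := by
  obtain ⟨w, h1, h2⟩ := h
  rw [dualInc_isLeft h1, dualInc_isLeft h2, Bool.not_not]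

lemma rt_step2_isLeft {S L : Type} {inc0 : S → L → Prop} {x y : S ⊕ L}
    (h : Relation.ReflTransGen (step2 inc0) x y) : x.isLeft = y.isLeft := by
  induction h with
  | refl => rfl
  | tail _ hbc ih => rw [ih, step2_isLeft hbc]

lemma incStep_imp_dualInc {S L : Type} {inc0 : S → L → Prop} {x y : S ⊕ L}
    (h : IncStep inc0 Set.univ Set.univ x y) : dualInc inc0 x y := by
  obtain ⟨a, l, -, -, hinc, (⟨rfl, rfl⟩ | ⟨rfl, rfl⟩)⟩ := h <;> exact hinc

lemma rt_dual_to_step2 {S L : Type} {inc0 : S → L → Prop} {x y : S ⊕ L}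
    (h : Relation.ReflTransGen (dualInc inc0) x y) :
    Relation.ReflTransGen (step2 inc0) x y ∨
      ∃ z, Relation.ReflTransGen (step2 inc0) x z ∧ dualInc inc0 z y := by
  induction h with
  | refl => exact Or.inl Relation.ReflTransGen.refl
  | tail _ hbc ih =>
    rcases ih with h1 | ⟨z, h1, h2⟩
    · exact Or.inr ⟨_, h1, hbc⟩
    · exact Or.inl (h1.tail ⟨_, h2, hbc⟩)

lemma conn_step2 (hconn : ConnectedPLS inc0) (x y : S ⊕ L) (h : x.isLeft = y.isLeft) :
    Relation.ReflTransGen (step2 inc0) x y := by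
  have h0 := hconn x y (by cases x <;> trivial) (by cases y <;> trivial)
  have h1 : Relation.ReflTransGen (dualInc inc0) x y :=
    Relation.ReflTransGen.mono (p := dualInc inc0) (fun _ _ => incStep_imp_dualInc) _ _ h0
  rcases rt_dual_to_step2 h1 with h2 | ⟨z, h2, h3⟩
  · exact h2
  · exfalso
    have := rt_step2_isLeft h2
    rw [h, dualInc_isLeft h3] at this
    cases y <;> simp at this

/-- The fiber relation on the points of the star structure. -/
def fibRel (G : Type) [CommRing G] {S L : Type} (inc0 : S → L → Prop) :
    ↥(starPt G S L) → ↥(starPt G S L) → Prop :=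
  fun p q => ∃ l, starInc G inc0 p l ∧ starInc G inc0 q l ∧
    ¬ starDod G inc0 p l ∧ ¬ starDod G inc0 q l

lemma fibRel_fst (hone : (1 : G) ≠ 0) {p q : ↥(starPt G S L)}
    (h : fibRel G inc0 p q) : p.val.1 = q.val.1 := by
  obtain ⟨l, h1, h2, h3, h4⟩ := h
  rw [starInc_fst_of_not_dod inc0 hone h1 h3, starInc_fst_of_not_dod inc0 hone h2 h4]

lemma rt_fibRel_fst (hone : (1 : G) ≠ 0) {p q : ↥(starPt G S L)}
    (h : Relation.ReflTransGen (fibRel G inc0) p q) : p.val.1 = q.val.1 := by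
  induction h with
  | refl => rfl
  | tail _ hbc ih => rw [ih, fibRel_fst inc0 hone hbc]

lemma mem_starPt_of_isLeft {i : G} {u v : S ⊕ L} (h : (i, v) ∈ starPt G S L)
    (he : u.isLeft = v.isLeft) : (i, u) ∈ starPt G S L := by
  rcases h with ⟨hE, a, hv⟩ | ⟨hO, m, hv⟩
  · have hv' : v = Sum.inl a := hv
    subst hv'
    cases u with
    | inl b => exact Or.inl ⟨hE, b, rfl⟩
    | inr m' => simp at he
  · have hv' : v = Sum.inr m := hv
    subst hv'
    cases u with
    | inl b => simp at he
    | inr m' => exact Or.inr ⟨hO, m', rfl⟩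

lemma mem_starLn_of_dual {i : G} {u w : S ⊕ L} (h : (i, u) ∈ starPt G S L)
    (hd : dualInc inc0 u w) : (i, w) ∈ starLn G S L := by
  rcases h with ⟨hE, a, hu⟩ | ⟨hO, m, hu⟩
  · have hu' : u = Sum.inl a := hu
    subst hu'
    cases w with
    | inl b => exact hd.elim
    | inr m' => exact Or.inl ⟨hE, m', rfl⟩
  · have hu' : u = Sum.inr m := hu
    subst hu'
    cases w with
    | inl b => exact Or.inr ⟨hO, b, rfl⟩
    | inr m' => exact hd.elim

lemma lift_rt (hone : (1 : G) ≠ 0) {i : G} {x y : S ⊕ L}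
    (h : Relation.ReflTransGen (step2 inc0) x y) :
    ∀ (hx : (i, x) ∈ starPt G S L) (hy : (i, y) ∈ starPt G S L),
      Relation.ReflTransGen (fibRel G inc0) ⟨(i, x), hx⟩ ⟨(i, y), hy⟩ := by
  induction h with
  | refl => intro hx hy; exact Relation.ReflTransGen.refl
  | @tail b c hab hbc ih =>
    intro hx hy
    have hb : (i, b) ∈ starPt G S L :=
      mem_starPt_of_isLeft hy (step2_isLeft hbc)
    refine (ih hx hb).tail ?_
    obtain ⟨w, h1, h2⟩ := hbc
    refine ⟨⟨(i, w), mem_starLn_of_dual inc0 hb h1⟩, Or.inl ⟨rfl, h1⟩,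
      Or.inl ⟨rfl, dualInc_symm h2⟩, ?_, ?_⟩ <;>
      exact not_dod_of_fst_eq inc0 hone rfl

lemma fiber_rt (hone : (1 : G) ≠ 0) (hconn : ConnectedPLS inc0)
    {p q : ↥(starPt G S L)} (h : p.val.1 = q.val.1) :
    Relation.ReflTransGen (fibRel G inc0) p q := by
  obtain ⟨⟨i, x⟩, hp⟩ := p
  obtain ⟨⟨j, y⟩, hq⟩ := q
  dsimp only at h
  subst h
  have hlr : x.isLeft = y.isLeft := by
    rcases hp with ⟨hE, a, hx⟩ | ⟨hO, m, hx⟩ <;>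
      rcases hq with ⟨hE', b, hy⟩ | ⟨hO', m', hy⟩ <;>
      first
        | (exfalso; exact hO hE') | (exfalso; exact hO' hE)
        | (subst hx; subst hy; rfl)
  exact lift_rt inc0 hone (conn_step2 inc0 hconn x y hlr) hp hq

end Chains
section Final

variable {G : Type} [CommRing G] {S L : Type} [Finite S] [Finite L] (inc0 : S → L → Prop)

/-- The inverse of an automorphism. -/
def isoSymm {P L' : Type} {inc : P → L' → Prop} (f : IncIso inc inc) : IncIso inc inc where
  pt := f.pt.symm
  ln := f.ln.symm
  pres := fun a l => by
    have h := f.pres (f.pt.symm a) (f.ln.symm l)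
    rw [f.pt.apply_symm_apply, f.ln.apply_symm_apply] at h
    exact h.symm

lemma iso_fibRel {κ ρ : ℕ} (hdeg : ∀ a, ptDeg inc0 a = κ)
    (hsize : ∀ l, lnSize inc0 l = ρ) (hne : ρ ≠ κ)
    (hone : (1 : G) ≠ 0) (halt : ∀ x : G, Even (x + 1) ↔ ¬ Even x)
    (g : IncIso (starInc G inc0) (starInc G inc0)) :
    ∀ p q, fibRel G inc0 p q → fibRel G inc0 (g.pt p) (g.pt q) := by
  rintro p q ⟨l, h1, h2, h3, h4⟩
  exact ⟨g.ln l, (g.pres p l).mp h1, (g.pres q l).mp h2,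
    fun hd => h3 ((iso_dod inc0 hdeg hsize hne hone halt g p l).mp hd),
    fun hd => h4 ((iso_dod inc0 hdeg hsize hne hone halt g q l).mp hd)⟩

lemma line_fiber_char (hPLS : IsPLS inc0) (hone : (1 : G) ≠ 0)
    {l : ↥(starLn G S L)} {i : G} :
    l.val.1 = i ↔ ∃ p : ↥(starPt G S L), p.val.1 = i ∧ starInc G inc0 p l ∧
      ¬ starDod G inc0 p l := by
  constructor
  · intro h
    obtain ⟨⟨j, y⟩, hl⟩ := l
    dsimp only at h
    rcases y with a | m
    · obtain ⟨l1, l2, -, h1, -⟩ := hPLS.2.1 a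
      exact ⟨⟨(j, Sum.inr l1), Or.inr ⟨starLn_odd_inl hl, l1, rfl⟩⟩, h,
        Or.inl ⟨rfl, h1⟩, not_dod_of_fst_eq inc0 hone rfl⟩
    · obtain ⟨a, b, -, h1, -⟩ := hPLS.1 m
      exact ⟨⟨(j, Sum.inl a), Or.inl ⟨starLn_even_inr hl, a, rfl⟩⟩, h,
        Or.inl ⟨rfl, h1⟩, not_dod_of_fst_eq inc0 hone rfl⟩
  · rintro ⟨p, hp1, hp2, hp3⟩
    rw [← starInc_fst_of_not_dod inc0 hone hp2 hp3]
    exact hp1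

end Final

/-- if `M₀` is a connected finite PLS with constant point degree `κ`
and constant line size `ρ ≠ κ`, then every automorphism of `⊛_G(∘, M₀)` permutes
the covering `{im(ε_i) : i ∈ G}` by closed substructures. -/
theorem star_automorphism_preserves_cover {G : Type} [CommRing G] (hG : GoodGroup G)
    {S L : Type} [Finite S] [Finite L] (inc0 : S → L → Prop) (hPLS : IsPLS inc0)
    (hconn : ConnectedPLS inc0)
    (κ ρ : ℕ) (hdeg : ∀ a, ptDeg inc0 a = κ) (hsize : ∀ l, lnSize inc0 l = ρ)
    (hne : ρ ≠ κ) :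
    ∀ (f : IncIso (starInc G inc0) (starInc G inc0)) (i : G), ∃ j : G,
      f.pt '' {p : ↥(starPt G S L) | p.val.1 = i} = {p : ↥(starPt G S L) | p.val.1 = j} ∧
      f.ln '' {l : ↥(starLn G S L) | l.val.1 = i} = {l : ↥(starLn G S L) | l.val.1 = j} := by
  intro f i
  obtain ⟨φ, hφ⟩ := goodGroup_parity hG
  have hone : (1 : G) ≠ 0 := by
    intro h
    have h0 : Even (1 : G) := h ▸ Even.zero
    have := (hφ 1).mp h0
    rw [map_one] at this
    exact one_ne_zero this
  have halt : ∀ x : G, Even (x + 1) ↔ ¬ Even x := by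
    intro x
    rw [hφ, hφ, map_add, map_one]
    generalize φ x = z
    revert z
    decide
  by_cases hS : Nonempty S
  · obtain ⟨a0⟩ := hS
    obtain ⟨m0⟩ : Nonempty L := by
      obtain ⟨l1, l2, -, -, -⟩ := hPLS.2.1 a0
      exact ⟨l1⟩
    obtain ⟨p₀, hp₀⟩ : ∃ p₀ : ↥(starPt G S L), p₀.val.1 = i := by
      rcases em (Even i) with hEi | hEi
      · exact ⟨⟨(i, Sum.inl a0), Or.inl ⟨hEi, a0, rfl⟩⟩, rfl⟩
      · exact ⟨⟨(i, Sum.inr m0), Or.inr ⟨hEi, m0, rfl⟩⟩, rfl⟩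
    set j := (f.pt p₀).val.1 with hj
    have hpt : f.pt '' {p : ↥(starPt G S L) | p.val.1 = i}
        = {p : ↥(starPt G S L) | p.val.1 = j} := by
      ext q
      constructor
      · rintro ⟨r, hr, rfl⟩
        have hc : Relation.ReflTransGen (fibRel G inc0) p₀ r :=
          fiber_rt inc0 hone hconn (hp₀.trans hr.symm)
        have hc2 : Relation.ReflTransGen (fibRel G inc0) (f.pt p₀) (f.pt r) :=
          Relation.ReflTransGen.lift f.pt
            (iso_fibRel inc0 hdeg hsize hne hone halt f) _ _ hc
        exact (rt_fibRel_fst inc0 hone hc2).symm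
      · intro hq
        have hc : Relation.ReflTransGen (fibRel G inc0) (f.pt p₀) q :=
          fiber_rt inc0 hone hconn (hj.symm.trans hq.symm)
        have hc2 : Relation.ReflTransGen (fibRel G inc0)
            (f.pt.symm (f.pt p₀)) (f.pt.symm q) :=
          Relation.ReflTransGen.lift (isoSymm f).pt
            (iso_fibRel inc0 hdeg hsize hne hone halt (isoSymm f)) _ _ hc
        rw [f.pt.symm_apply_apply] at hc2
        have hfq : (f.pt.symm q).val.1 = i :=
          (rt_fibRel_fst inc0 hone hc2).symm.trans hp₀
        exact ⟨f.pt.symm q, hfq, f.pt.apply_symm_apply q⟩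
    refine ⟨j, hpt, ?_⟩
    ext l'
    constructor
    · rintro ⟨l, hl, rfl⟩
      obtain ⟨p, hp1, hp2, hp3⟩ := (line_fiber_char inc0 hPLS hone).mp hl
      have hfp : (f.pt p).val.1 = j := by
        have hm : f.pt p ∈ {p : ↥(starPt G S L) | p.val.1 = j} := by
          rw [← hpt]; exact ⟨p, hp1, rfl⟩
        exact hm
      exact (line_fiber_char inc0 hPLS hone).mpr
        ⟨f.pt p, hfp, (f.pres p l).mp hp2,
          fun hd => hp3 ((iso_dod inc0 hdeg hsize hne hone halt f p l).mp hd)⟩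
    · intro hl'
      obtain ⟨p', hp1, hp2, hp3⟩ := (line_fiber_char inc0 hPLS hone).mp hl'
      refine ⟨f.ln.symm l', ?_, f.ln.apply_symm_apply l'⟩
      have hp'i : (f.pt.symm p').val.1 = i := by
        have hm : p' ∈ {p : ↥(starPt G S L) | p.val.1 = j} := hp1
        rw [← hpt] at hm
        obtain ⟨r, hr, hre⟩ := hm
        have : f.pt.symm p' = r := by rw [← hre, f.pt.symm_apply_apply]
        rw [this]; exact hr
      exact (line_fiber_char inc0 hPLS hone).mpr
        ⟨f.pt.symm p', hp'i, ((isoSymm f).pres p' l').mp hp2,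
          fun hd => hp3 ((iso_dod inc0 hdeg hsize hne hone halt (isoSymm f) p' l').mp hd)⟩
  · have hL : ¬ Nonempty L := by
      rintro ⟨m⟩
      obtain ⟨a, -, -, -, -⟩ := hPLS.1 m
      exact hS ⟨a⟩
    have hSL : (S ⊕ L) → False := fun x => x.elim (fun a => hS ⟨a⟩) (fun m => hL ⟨m⟩)
    refine ⟨i, ?_, ?_⟩
    · ext p; exact (hSL p.val.2).elim
    · ext l; exact (hSL l.val.2).elim
end
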